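/- Suppose two users in flat channels both spread their maximum powers uniformly over a common band of size s, so that user i has constant PSD P_i/s there. Then the total capacity equals g(s) = s·log(1 + P_1 h_{11}/(P_2 h_{21} + s N_1)) + s·log(1 + P_2 h_{22}/(P_1 h_{12} + s N_2)), and g is strictly increasing on (0,∞). Consequently, over common bands of size s ≤ W the total capacity is maximized at s = W, where it equals W·log(1 + P_1 h_{11}/(P_2 h_{21} + W N_1)) + W·log(1 + P_2 h_{22}/(P_1 h_{12} + W N_2)). -/

import Mathlib

open Real

lemma log_ineq_aux {x : ℝ} (hx : 0 < x) : x / (1 + x) < Real.log (1 + x) := by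
  have h1 : (0:ℝ) < 1 + x := by linarith
  have h2 := Real.log_lt_sub_one_of_pos (inv_pos.mpr h1) (by
    intro h
    have : (1:ℝ) + x = 1 := by
      field_simp at h
      linarith
    linarith)
  rw [Real.log_inv] at h2
  have h3 : (1+x)⁻¹ - 1 = -(x/(1+x)) := by field_simp; ring
  rw [h3] at h2
  linarith

lemma capacity_term_strictMono (a b c : ℝ) (ha : 0 < a) (hb : 0 ≤ b) (hc : 0 < c) :
    StrictMonoOn (fun s => s * Real.log (1 + a / (b + s * c))) (Set.Ioi (0:ℝ)) := by
  have key : ∀ s ∈ Set.Ioi (0:ℝ),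
      HasDerivAt (fun s => s * Real.log (1 + a / (b + s * c)))
        (1 * Real.log (1 + a / (b + s * c)) +
          s * (a * (-c / (b + s * c) ^ 2) / (1 + a / (b + s * c)))) s := by
    intro s hs
    have hs0 : 0 < s := hs
    have hD : 0 < b + s * c := by nlinarith
    have hDne : b + s * c ≠ 0 := ne_of_gt hD
    have hAne : 1 + a / (b + s * c) ≠ 0 := by positivity
    have h1 : HasDerivAt (fun s : ℝ => b + s * c) c s := by
      simpa using ((hasDerivAt_id s).mul_const c).const_add b
    have h2 : HasDerivAt (fun s : ℝ => a * (b + s * c)⁻¹)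
        (a * (-c / (b + s * c) ^ 2)) s := by
      exact (h1.inv hDne).const_mul a
    have h3 : HasDerivAt (fun s : ℝ => 1 + a / (b + s * c))
        (a * (-c / (b + s * c) ^ 2)) s := by
      simpa [div_eq_mul_inv] using h2.const_add 1
    have h4 : HasDerivAt (fun s : ℝ => Real.log (1 + a / (b + s * c)))
        (a * (-c / (b + s * c) ^ 2) / (1 + a / (b + s * c))) s := h3.log hAne
    simpa using (hasDerivAt_id' s).fun_mul h4
  apply strictMonoOn_of_deriv_pos (convex_Ioi 0)
  · exact fun x hx => ((key x hx).continuousAt).continuousWithinAt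
  · intro s hs
    rw [interior_Ioi] at hs
    rw [(key s hs).deriv]
    have hs0 : 0 < s := hs
    have hD : 0 < b + s * c := by nlinarith
    have hDne : b + s * c ≠ 0 := ne_of_gt hD
    set x := a / (b + s * c) with hxdef
    have hx : 0 < x := div_pos ha hD
    have hAne : (1:ℝ) + x ≠ 0 := by positivity
    have hrw : 1 * Real.log (1 + x) + s * (a * (-c / (b + s * c) ^ 2) / (1 + x))
        = Real.log (1 + x) - (s * c / (b + s * c)) * (x / (1 + x)) := by
      rw [hxdef]
      field_simp
      ring
    rw [hrw]
    have ht : 0 < x / (1 + x) := by positivity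
    have htL : x / (1 + x) < Real.log (1 + x) := log_ineq_aux hx
    have hfrac : s * c / (b + s * c) ≤ 1 := by
      rw [div_le_one hD]; linarith
    have : (s * c / (b + s * c)) * (x / (1 + x)) ≤ 1 * (x / (1 + x)) :=
      mul_le_mul_of_nonneg_right hfrac ht.le
    linarith

/-- when both users spread their maximum powers uniformly over a
common band of size `s`, the total capacity equals
`g(s) = s·log(1 + P₁h₁₁/(P₂h₂₁ + sN₁)) + s·log(1 + P₂h₂₂/(P₁h₁₂ + sN₂))`;
`g` is strictly increasing on `(0,∞)`, hence over `0 < s ≤ W` it is maximized at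
`s = W`, where it equals the stated expression. -/
theorem full_overlap_capacity
    (W P1 P2 h11 h22 h12 h21 N1 N2 : ℝ)
    (hW : 0 < W) (hP1 : 0 < P1) (hP2 : 0 < P2)
    (hh11 : 0 < h11) (hh22 : 0 < h22) (hh12 : 0 ≤ h12) (hh21 : 0 ≤ h21)
    (hN1 : 0 < N1) (hN2 : 0 < N2) :
    ∃ g : ℝ → ℝ,
      (∀ s : ℝ, 0 < s →
        g s = s * (Real.log (1 + (P1 / s) * h11 / ((P2 / s) * h21 + N1)) +
                   Real.log (1 + (P2 / s) * h22 / ((P1 / s) * h12 + N2)))) ∧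
      (∀ s : ℝ, 0 < s →
        g s = s * Real.log (1 + P1 * h11 / (P2 * h21 + s * N1)) +
              s * Real.log (1 + P2 * h22 / (P1 * h12 + s * N2))) ∧
      StrictMonoOn g (Set.Ioi (0:ℝ)) ∧
      (∀ s : ℝ, 0 < s → s ≤ W → g s ≤ g W) ∧
      g W = W * Real.log (1 + P1 * h11 / (P2 * h21 + W * N1)) +
            W * Real.log (1 + P2 * h22 / (P1 * h12 + W * N2)) := by
  refine ⟨fun s => s * Real.log (1 + P1 * h11 / (P2 * h21 + s * N1)) +
      s * Real.log (1 + P2 * h22 / (P1 * h12 + s * N2)), ?_, fun s _ => rfl, ?_, ?_, rfl⟩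
  · intro s hs
    have hs0 : s ≠ 0 := ne_of_gt hs
    have e1 : (P1 / s) * h11 / ((P2 / s) * h21 + N1) = P1 * h11 / (P2 * h21 + s * N1) := by
      rw [div_eq_div_iff]
      · field_simp
      · have : 0 < P2 / s * h21 + N1 := by positivity
        linarith
      · have : 0 < P2 * h21 + s * N1 := by positivity
        linarith
    have e2 : (P2 / s) * h22 / ((P1 / s) * h12 + N2) = P2 * h22 / (P1 * h12 + s * N2) := by
      rw [div_eq_div_iff]
      · field_simp
      · have : 0 < P1 / s * h12 + N2 := by positivity
        linarith
      · have : 0 < P1 * h12 + s * N2 := by positivity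
        linarith
    rw [e1, e2]; ring
  · have hmono : StrictMonoOn (fun s => s * Real.log (1 + P1 * h11 / (P2 * h21 + s * N1)) +
        s * Real.log (1 + P2 * h22 / (P1 * h12 + s * N2))) (Set.Ioi (0:ℝ)) := by
      have m1 := capacity_term_strictMono (P1 * h11) (P2 * h21) N1 (by positivity)
        (by positivity) hN1
      have m2 := capacity_term_strictMono (P2 * h22) (P1 * h12) N2 (by positivity)
        (by positivity) hN2
      exact m1.add m2
    exact hmono
  · have hmono : StrictMonoOn (fun s => s * Real.log (1 + P1 * h11 / (P2 * h21 + s * N1)) +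
        s * Real.log (1 + P2 * h22 / (P1 * h12 + s * N2))) (Set.Ioi (0:ℝ)) := by
      have m1 := capacity_term_strictMono (P1 * h11) (P2 * h21) N1 (by positivity)
        (by positivity) hN1
      have m2 := capacity_term_strictMono (P2 * h22) (P1 * h12) N2 (by positivity)
        (by positivity) hN2
      exact m1.add m2
    intro s hs hsW
    rcases eq_or_lt_of_le hsW with h | h
    · subst h; exact le_refl _
    · exact (hmono hs (Set.mem_Ioi.mpr hW) h).le
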